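/- There exists a constant C depending only on N₁, N₂, β₁, β₂ such that for every ε ∈ [0,1] and every radial solution (u₁,u₂) of the deformed one-point Chern–Simons system with parameter ε and exponents (β₁,β₂), writing u_i(x) = U_i(|x|), one has |r·U_i′(r)| ≤ C for all r > 0 and U_i(r) ≤ −2 ln r + C for all r ≥ 1, for i = 1,2. -/

import Mathlib

open MeasureTheory Metric Filter

noncomputable section

/-- The Euclidean plane ℝ². -/
abbrev Plane := EuclideanSpace ℝ (Fin 2)

/-- The Laplacian of `f : ℝ² → ℝ`. -/
noncomputable def lap (f : Plane → ℝ) (x : Plane) : ℝ :=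
  ∑ i : Fin 2, iteratedFDeriv ℝ 2 f x (fun _ => EuclideanSpace.single i 1)

/-- A fixed unit vector in ℝ². -/
noncomputable def e₀ : Plane := EuclideanSpace.single 0 1

/-- A radial solution of the deformed one-point Chern–Simons system with parameter
`ε ∈ [0,1]` and exponents `(β₁, β₂)`: a pair `uᵢ(x) = 2εNᵢ ln|x| + vᵢ(x)` with `v₁, v₂`
radially symmetric and C², solving `Δv₁ + e^{u₂}(1 - e^{u₁}) = 0`,
`Δv₂ + e^{u₁}(1 - e^{u₂}) = 0` on ℝ² (where `e^{uᵢ(x)} = |x|^{2εNᵢ} e^{vᵢ(x)}`,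
extended continuously to `x = 0` via `rpow`), with `u₁, u₂ < 0` off the origin and
`uᵢ(x) + 2βᵢ ln|x|` bounded on `{|x| ≥ 1}`. -/
structure RadSol (N₁ N₂ : ℕ) (β₁ β₂ ε : ℝ) : Type where
  v₁ : Plane → ℝ
  v₂ : Plane → ℝ
  cd₁ : ContDiff ℝ 2 v₁
  cd₂ : ContDiff ℝ 2 v₂
  rad₁ : ∀ x y : Plane, ‖x‖ = ‖y‖ → v₁ x = v₁ y
  rad₂ : ∀ x y : Plane, ‖x‖ = ‖y‖ → v₂ x = v₂ y
  pde₁ : ∀ x : Plane, lap v₁ x +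
    (‖x‖ ^ (2 * ε * (N₂ : ℝ)) * Real.exp (v₂ x)) *
      (1 - ‖x‖ ^ (2 * ε * (N₁ : ℝ)) * Real.exp (v₁ x)) = 0
  pde₂ : ∀ x : Plane, lap v₂ x +
    (‖x‖ ^ (2 * ε * (N₁ : ℝ)) * Real.exp (v₁ x)) *
      (1 - ‖x‖ ^ (2 * ε * (N₂ : ℝ)) * Real.exp (v₂ x)) = 0
  neg₁ : ∀ x : Plane, x ≠ 0 → 2 * ε * (N₁ : ℝ) * Real.log ‖x‖ + v₁ x < 0
  neg₂ : ∀ x : Plane, x ≠ 0 → 2 * ε * (N₂ : ℝ) * Real.log ‖x‖ + v₂ x < 0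
  asymp₁ : ∃ C : ℝ, ∀ x : Plane, 1 ≤ ‖x‖ →
    |2 * ε * (N₁ : ℝ) * Real.log ‖x‖ + v₁ x + 2 * β₁ * Real.log ‖x‖| ≤ C
  asymp₂ : ∃ C : ℝ, ∀ x : Plane, 1 ≤ ‖x‖ →
    |2 * ε * (N₂ : ℝ) * Real.log ‖x‖ + v₂ x + 2 * β₂ * Real.log ‖x‖| ≤ C


open Set


-- directional derivative along a line
lemma line_hasDerivAt {f : Plane → ℝ} (hf : Differentiable ℝ f) (y w : Plane) (t : ℝ) :
    HasDerivAt (fun s : ℝ => f (y + s • w)) (fderiv ℝ f (y + t • w) w) t := by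
  have hL : HasDerivAt (fun s : ℝ => y + s • w) w t := by
    simpa using ((hasDerivAt_id t).smul_const w).const_add y
  exact ((hf _).hasFDerivAt).comp_hasDerivAt t hL

lemma snd_dir_deriv {f : Plane → ℝ} (hf : ContDiff ℝ 2 f) (x w : Plane) :
    iteratedFDeriv ℝ 2 f x (fun _ => w) = deriv (deriv (fun t : ℝ => f (x + t • w))) 0 := by
  have hdiff : Differentiable ℝ f := hf.differentiable (by norm_num)
  have hfd : ContDiff ℝ 1 (fun y => fderiv ℝ f y) := (contDiff_succ_iff_fderiv.1 hf).2.2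
  have hg : Differentiable ℝ (fun y => fderiv ℝ f y w) :=
    (hfd.differentiable (by norm_num)).clm_apply (differentiable_const w)
  have h1 : deriv (fun t : ℝ => f (x + t • w)) = fun t => fderiv ℝ f (x + t • w) w := by
    funext t; exact (line_hasDerivAt hdiff x w t).deriv
  rw [iteratedFDeriv_two_apply f x (fun _ => w), h1]
  have h2 : HasDerivAt (fun t : ℝ => fderiv ℝ f (x + t • w) w)
      (fderiv ℝ (fun y => fderiv ℝ f y w) (x + (0:ℝ) • w) w) 0 := line_hasDerivAt hg x w 0
  rw [h2.deriv]
  have h3 : fderiv ℝ (fun y => fderiv ℝ f y w) x = (fderiv ℝ (fderiv ℝ f) x).flip w := by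
    have := fderiv_clm_apply (𝕜 := ℝ) (c := fun y => fderiv ℝ f y) (u := fun _ => w)
      ((hfd.differentiable (by norm_num)) x) (differentiableAt_const w)
    simpa using this
  simp [h3]

noncomputable def e₁ : Plane := EuclideanSpace.single 1 1

lemma norm_e₀ : ‖e₀‖ = 1 := by simp [e₀, EuclideanSpace.norm_single]

lemma norm_smul_e₀ (s : ℝ) : ‖s • e₀‖ = |s| := by
  rw [norm_smul, norm_e₀]; simp

lemma norm_combo (r t : ℝ) : ‖r • e₀ + t • e₁‖ = Real.sqrt (r ^ 2 + t ^ 2) := by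
  rw [EuclideanSpace.norm_eq]
  congr 1
  rw [Fin.sum_univ_two]
  simp [e₀, e₁, EuclideanSpace.single_apply, sq_abs]

section radial
variable {v : Plane → ℝ}

lemma v_eq_Vr (hrad : ∀ x y : Plane, ‖x‖ = ‖y‖ → v x = v y) (x : Plane) :
    v x = (fun s : ℝ => v (s • e₀)) ‖x‖ :=
  hrad x (‖x‖ • e₀) (by rw [norm_smul_e₀, abs_of_nonneg (norm_nonneg x)])

lemma contDiff_Vr (hv : ContDiff ℝ 2 v) : ContDiff ℝ 2 (fun s : ℝ => v (s • e₀)) :=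
  hv.comp ((contDiff_id).smul contDiff_const)

lemma lap_radial (hv : ContDiff ℝ 2 v)
    (hrad : ∀ x y : Plane, ‖x‖ = ‖y‖ → v x = v y) {r : ℝ} (hr : 0 < r) :
    lap v (r • e₀) = deriv (deriv (fun s : ℝ => v (s • e₀))) r
      + deriv (fun s : ℝ => v (s • e₀)) r / r := by
  set V : ℝ → ℝ := fun s : ℝ => v (s • e₀) with hV
  have hVc : ContDiff ℝ 2 V := contDiff_Vr hv
  have hVd : Differentiable ℝ V := hVc.differentiable (by norm_num)
  have hdVc : ContDiff ℝ 1 (deriv V) := by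
    have := (contDiff_succ_iff_deriv (n := 1)).1 (by exact_mod_cast hVc)
    exact this.2.2
  have hdVd : Differentiable ℝ (deriv V) := hdVc.differentiable (by norm_num)
  have hlap : lap v (r • e₀) =
      deriv (deriv (fun t : ℝ => v (r • e₀ + t • e₀))) 0 +
      deriv (deriv (fun t : ℝ => v (r • e₀ + t • e₁))) 0 := by
    rw [lap, Fin.sum_univ_two, snd_dir_deriv hv _ _, snd_dir_deriv hv _ _]
    rfl
  -- radial direction
  have hrad0 : (fun t : ℝ => v (r • e₀ + t • e₀)) = fun t => V (r + t) := by
    funext t; rw [hV]; simp [add_smul]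
  have hterm0 : deriv (deriv (fun t : ℝ => v (r • e₀ + t • e₀))) 0 = deriv (deriv V) r := by
    rw [hrad0]
    have h1 : deriv (fun t : ℝ => V (r + t)) = fun t => deriv V (r + t) := by
      funext t; exact deriv_comp_const_add V r t
    rw [h1]
    have h2 : deriv (fun t : ℝ => deriv V (r + t)) 0 = deriv (deriv V) (r + 0) :=
      deriv_comp_const_add (deriv V) r 0
    rw [h2, add_zero]
  -- tangential direction
  have hg : ∀ t : ℝ, HasDerivAt (fun t : ℝ => Real.sqrt (r ^ 2 + t ^ 2))
      (t / Real.sqrt (r ^ 2 + t ^ 2)) t := by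
    intro t
    have hpos : (0:ℝ) < r ^ 2 + t ^ 2 := by positivity
    have h1 : HasDerivAt (fun t : ℝ => r ^ 2 + t ^ 2) (2 * t) t := by
      simpa using ((hasDerivAt_pow 2 t).const_add (r ^ 2))
    have := (Real.hasDerivAt_sqrt hpos.ne').comp t h1
    refine this.congr_deriv ?_
    have hs : Real.sqrt (r ^ 2 + t ^ 2) ≠ 0 := (Real.sqrt_pos.2 hpos).ne'
    field_simp
  have htan : (fun t : ℝ => v (r • e₀ + t • e₁))
      = fun t => V (Real.sqrt (r ^ 2 + t ^ 2)) := by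
    funext t
    rw [v_eq_Vr hrad (r • e₀ + t • e₁), norm_combo]
  have hterm1 : deriv (deriv (fun t : ℝ => v (r • e₀ + t • e₁))) 0 = deriv V r / r := by
    rw [htan]
    set g : ℝ → ℝ := fun t => Real.sqrt (r ^ 2 + t ^ 2) with hgdef
    have hgpos : ∀ t : ℝ, 0 < g t := fun t => Real.sqrt_pos.2 (by positivity)
    have h1 : deriv (fun t : ℝ => V (g t)) = fun t => (deriv V (g t) / g t) * t := by
      funext t
      have h := ((hVd (g t)).hasDerivAt).comp t (hg t)
      have h2 : HasDerivAt (fun t : ℝ => V (g t)) (deriv V (g t) * (t / g t)) t := h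
      rw [h2.deriv]
      field_simp
    rw [h1]
    have hA : HasDerivAt (fun t : ℝ => deriv V (g t) / g t)
        (deriv (fun t : ℝ => deriv V (g t) / g t) 0) 0 := by
      apply DifferentiableAt.hasDerivAt
      apply DifferentiableAt.div
      · exact (hdVd _).comp 0 (hg 0).differentiableAt
      · exact (hg 0).differentiableAt
      · exact (hgpos 0).ne'
    have h2 : HasDerivAt (fun t : ℝ => (deriv V (g t) / g t) * t)
        (deriv (fun t : ℝ => deriv V (g t) / g t) 0 * 0 + (deriv V (g 0) / g 0) * 1) 0 :=
      hA.mul (hasDerivAt_id 0)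
    rw [h2.deriv]
    have hg0 : g 0 = r := by
      rw [hgdef]; simp [Real.sqrt_sq hr.le]
    rw [hg0]; ring
  rw [hlap, hterm0, hterm1]

end radial


lemma antiOn_Ioi' {f g : ℝ → ℝ} (h : ∀ r > (0:ℝ), HasDerivAt f (g r) r)
    (hg : ∀ r > (0:ℝ), g r ≤ 0) : AntitoneOn f (Set.Ioi 0) := by
  apply antitoneOn_of_deriv_nonpos (convex_Ioi 0)
  · intro x hx; exact (h x hx).differentiableAt.continuousAt.continuousWithinAt
  · rw [interior_Ioi]; intro x hx; exact (h x hx).differentiableAt.differentiableWithinAt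
  · rw [interior_Ioi]; intro x hx; rw [(h x hx).deriv]; exact hg x hx

lemma monoOn_Ioi' {f g : ℝ → ℝ} (h : ∀ r > (0:ℝ), HasDerivAt f (g r) r)
    (hg : ∀ r > (0:ℝ), 0 ≤ g r) : MonotoneOn f (Set.Ioi 0) := by
  apply monotoneOn_of_deriv_nonneg (convex_Ioi 0)
  · intro x hx; exact (h x hx).differentiableAt.continuousAt.continuousWithinAt
  · rw [interior_Ioi]; intro x hx; exact (h x hx).differentiableAt.differentiableWithinAt
  · rw [interior_Ioi]; intro x hx; rw [(h x hx).deriv]; exact hg x hx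

/-- comparison: for `0 < a ≤ b`, with `U' = f(r)/r` and `f` antitone,
`U b ≤ U a + f a (log b - log a)` and `U a + f b (log b - log a) ≤ U b`. -/
lemma slope_bound {U f : ℝ → ℝ} (hU : ∀ r > (0:ℝ), HasDerivAt U (f r / r) r)
    (hf : AntitoneOn f (Set.Ioi 0)) {a b : ℝ} (ha : 0 < a) (hab : a ≤ b) :
    U b ≤ U a + f a * (Real.log b - Real.log a) ∧
    U a + f b * (Real.log b - Real.log a) ≤ U b := by
  have key : ∀ c : ℝ, ∀ t > (0:ℝ),
      HasDerivAt (fun t => U t - c * Real.log t) ((f t - c) / t) t := by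
    intro c t ht
    have h1 := (hU t ht).sub ((Real.hasDerivAt_log ht.ne').const_mul c)
    refine h1.congr_deriv ?_
    field_simp
  constructor
  · have hanti : AntitoneOn (fun t => U t - f a * Real.log t) (Set.Icc a b) := by
      apply antitoneOn_of_deriv_nonpos (convex_Icc a b)
      · intro x hx
        exact (key (f a) x (lt_of_lt_of_le ha hx.1)).differentiableAt.continuousAt.continuousWithinAt
      · rw [interior_Icc]; intro x hx
        exact (key (f a) x (lt_trans ha hx.1)).differentiableAt.differentiableWithinAt
      · rw [interior_Icc]; intro x hx
        rw [(key (f a) x (lt_trans ha hx.1)).deriv]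
        have : f x ≤ f a := hf (mem_Ioi.2 ha) (mem_Ioi.2 (lt_trans ha hx.1)) hx.1.le
        apply div_nonpos_of_nonpos_of_nonneg (by linarith) (lt_trans ha hx.1).le
    have := hanti (left_mem_Icc.2 hab) (right_mem_Icc.2 hab) hab
    simp only at this
    linarith [this]
  · have hb : 0 < b := lt_of_lt_of_le ha hab
    have hmono : MonotoneOn (fun t => U t - f b * Real.log t) (Set.Icc a b) := by
      apply monotoneOn_of_deriv_nonneg (convex_Icc a b)
      · intro x hx
        exact (key (f b) x (lt_of_lt_of_le ha hx.1)).differentiableAt.continuousAt.continuousWithinAt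
      · rw [interior_Icc]; intro x hx
        exact (key (f b) x (lt_trans ha hx.1)).differentiableAt.differentiableWithinAt
      · rw [interior_Icc]; intro x hx
        rw [(key (f b) x (lt_trans ha hx.1)).deriv]
        have : f b ≤ f x := hf (mem_Ioi.2 (lt_trans ha hx.1)) (mem_Ioi.2 hb) hx.2.le
        apply div_nonneg (by linarith) (lt_trans ha hx.1).le
    have := hmono (left_mem_Icc.2 hab) (right_mem_Icc.2 hab) hab
    simp only at this
    linarith [this]
lemma arith1 {Ua Ub fa la lb β C₀ K : ℝ} (hK : K = C₀ + Ua - fa * la)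
    (hδ : 0 < -(2*β) - fa) (hlogb : (|K|+1)/(-(2*β) - fa) ≤ lb)
    (hcomp : Ub ≤ Ua + fa * (lb - la)) (h1 : -(2*β*lb) - C₀ ≤ Ub) : False := by
  have e1 : fa * (lb - la) = fa*lb - fa*la := by ring
  have h2 : (-(2*β) - fa) * lb ≤ K := by
    have e2 : (-(2*β) - fa) * lb = -(2*β*lb) - fa*lb := by ring
    rw [e2, hK]; linarith
  have h3 : |K| + 1 ≤ (-(2*β) - fa) * lb := by
    have := (div_le_iff₀ hδ).1 hlogb; linarith
  linarith [le_abs_self K]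

lemma arith2 {U1 Ub fb lb β δ C₀ K : ℝ} (hK : K = C₀ - U1) (hδ : 0 < δ)
    (hlogb : lb = (|K|+1)/(δ/2)) (hlb0 : 0 ≤ lb)
    (hcomp : U1 + fb * lb ≤ Ub) (hfb : -(2*β) + δ/2 ≤ fb)
    (h2 : Ub ≤ -(2*β*lb) + C₀) : False := by
  have e : (δ/2) * lb = |K|+1 := by
    rw [hlogb]; field_simp
  have hmul : (-(2*β) + δ/2) * lb ≤ fb * lb := mul_le_mul_of_nonneg_right hfb hlb0
  have e2 : (-(2*β) + δ/2)*lb = -(2*β*lb) + (δ/2)*lb := by ring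
  linarith [le_abs_self K]

lemma arith3 {x β δ : ℝ} (h1 : -(2*β) ≤ x) (h2 : x ≤ -(2*β)+δ/2) (hδ : 0 < δ) :
    |x - -(2*β)| < δ := by
  rw [abs_lt]; constructor <;> linarith

lemma compFacts (N : ℕ) (β C₀ ε : ℝ) (hβ : 1 < β) (hε0 : 0 ≤ ε) (hε1 : ε ≤ 1)
    (V : ℝ → ℝ)
    (hdVc : Continuous (deriv V))
    (hasymp : ∀ r : ℝ, 1 ≤ r → |2*ε*(N:ℝ)*Real.log r + V r + 2*β*Real.log r| ≤ C₀)
    (hanti : AntitoneOn (fun r => 2*ε*(N:ℝ) + r * deriv V r) (Set.Ioi 0))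
    (hUd : ∀ r, 0 < r → HasDerivAt (fun s => 2*ε*(N:ℝ)*Real.log s + V s)
      ((2*ε*(N:ℝ) + r * deriv V r) / r) r) :
    (∀ r, 0 < r → 2*ε*(N:ℝ) + r * deriv V r ≤ 2*(N:ℝ)) ∧
    (∀ r, 0 < r → -(2*β) ≤ 2*ε*(N:ℝ) + r * deriv V r) ∧
    Tendsto (fun r => 2*ε*(N:ℝ) + r * deriv V r) atTop (nhds (-(2*β))) := by
  set f : ℝ → ℝ := fun r => 2*ε*(N:ℝ) + r * deriv V r with hfdef
  set U : ℝ → ℝ := fun s => 2*ε*(N:ℝ)*Real.log s + V s with hUdef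
  -- upper bound  f r ≤ 2 ε N
  have hupper : ∀ r, 0 < r → f r ≤ 2*ε*(N:ℝ) := by
    intro r hr
    have hc : Continuous f := continuous_const.add (continuous_id.mul hdVc)
    have h0 : f 0 = 2*ε*(N:ℝ) := by simp [hfdef]
    have h1 : Tendsto f (nhds 0) (nhds (2*ε*(N:ℝ))) := h0 ▸ hc.tendsto 0
    have hcont : Tendsto f (nhdsWithin 0 (Set.Ioi 0)) (nhds (2*ε*(N:ℝ))) :=
      h1.mono_left nhdsWithin_le_nhds
    apply ge_of_tendsto hcont
    filter_upwards [Ioo_mem_nhdsGT_of_mem (Set.left_mem_Ico.2 hr)] with s hs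
    exact hanti (mem_Ioi.2 hs.1) (mem_Ioi.2 hr) hs.2.le
  have hεN : 2*ε*(N:ℝ) ≤ 2*(N:ℝ) := by nlinarith [(Nat.cast_nonneg N : (0:ℝ) ≤ (N:ℝ))]
  -- asymp bounds
  have hUub : ∀ r, 1 ≤ r → U r ≤ -(2*β*Real.log r) + C₀ := by
    intro r hr
    have := (abs_le.1 (hasymp r hr)).2
    simp only [hUdef]; linarith
  have hUlb : ∀ r, 1 ≤ r → -(2*β*Real.log r) - C₀ ≤ U r := by
    intro r hr
    have := (abs_le.1 (hasymp r hr)).1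
    simp only [hUdef]; linarith
  -- lower bound for f on [1, ∞)
  have hlower1 : ∀ a, 1 ≤ a → -(2*β) ≤ f a := by
    intro a ha
    by_contra hcon
    push_neg at hcon
    have hδ : 0 < -(2*β) - f a := by linarith
    obtain ⟨b, hab, hb1, hlogb⟩ : ∃ b, a ≤ b ∧ 1 ≤ b ∧
        (|C₀ + U a - f a * Real.log a|+1)/(-(2*β) - f a) ≤ Real.log b := by
      refine ⟨max a (Real.exp ((|C₀ + U a - f a * Real.log a|+1)/(-(2*β) - f a))),
        le_max_left _ _, le_trans ha (le_max_left _ _), ?_⟩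
      calc (|C₀ + U a - f a * Real.log a|+1)/(-(2*β) - f a)
          = Real.log (Real.exp ((|C₀ + U a - f a * Real.log a|+1)/(-(2*β) - f a))) :=
            (Real.log_exp _).symm
      _ ≤ _ := Real.log_le_log (Real.exp_pos _) (le_max_right a _)
    exact arith1 rfl hδ hlogb
      ((slope_bound hUd hanti (lt_of_lt_of_le one_pos ha) hab).1) (hUlb b hb1)
  have hlower : ∀ r, 0 < r → -(2*β) ≤ f r := by
    intro r hr
    rcases le_total 1 r with h | h
    · exact hlower1 r h
    · exact le_trans (hlower1 1 le_rfl) (hanti (mem_Ioi.2 hr) (mem_Ioi.2 one_pos) h)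
  refine ⟨fun r hr => le_trans (hupper r hr) hεN, hlower, ?_⟩
  -- limit
  rw [Metric.tendsto_atTop]
  intro δ hδ
  have hexist : ∃ a, 1 ≤ a ∧ f a ≤ -(2*β) + δ/2 := by
    by_contra hcon
    push_neg at hcon
    set b : ℝ := Real.exp ((|C₀ - U 1|+1)/(δ/2)) with hbdef
    have hb1 : 1 ≤ b := Real.one_le_exp (by positivity)
    have hlogb : Real.log b = (|C₀ - U 1|+1)/(δ/2) := Real.log_exp _
    have hcomp : U 1 + f b * (Real.log b - Real.log 1) ≤ U b :=
      (slope_bound hUd hanti one_pos hb1).2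
    rw [Real.log_one, sub_zero] at hcomp
    exact arith2 rfl hδ hlogb (Real.log_nonneg hb1) hcomp (hcon b hb1).le (hUub b hb1)
  obtain ⟨a, ha1, hfa⟩ := hexist
  refine ⟨a, fun r hr => ?_⟩
  have hr0 : 0 < r := lt_of_lt_of_le (lt_of_lt_of_le one_pos ha1) hr
  have hle : f r ≤ -(2*β) + δ/2 :=
    le_trans (hanti (mem_Ioi.2 (lt_of_lt_of_le one_pos ha1)) (mem_Ioi.2 hr0) hr) hfa
  rw [Real.dist_eq]
  exact arith3 (hlower r hr0) hle hδ

lemma core (N₁ N₂ : ℕ) (β₁ β₂ ε C₁ C₂ : ℝ) (hβ₁ : 1 < β₁) (hβ₂ : 1 < β₂)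
    (hε0 : 0 ≤ ε) (hε1 : ε ≤ 1)
    (V₁ V₂ : ℝ → ℝ)
    (hV1diff : Differentiable ℝ V₁) (hV2diff : Differentiable ℝ V₂)
    (hdV1c : Continuous (deriv V₁)) (hdV2c : Continuous (deriv V₂))
    (hdd1 : ∀ r : ℝ, HasDerivAt (deriv V₁) (deriv (deriv V₁) r) r)
    (hdd2 : ∀ r : ℝ, HasDerivAt (deriv V₂) (deriv (deriv V₂) r) r)
    (hpde1 : ∀ r : ℝ, 0 < r → deriv (deriv V₁) r + deriv V₁ r / r
      = -(Real.exp (2*ε*(N₂:ℝ)*Real.log r + V₂ r)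
          * (1 - Real.exp (2*ε*(N₁:ℝ)*Real.log r + V₁ r))))
    (hpde2 : ∀ r : ℝ, 0 < r → deriv (deriv V₂) r + deriv V₂ r / r
      = -(Real.exp (2*ε*(N₁:ℝ)*Real.log r + V₁ r)
          * (1 - Real.exp (2*ε*(N₂:ℝ)*Real.log r + V₂ r))))
    (hneg1 : ∀ r : ℝ, 0 < r → 2*ε*(N₁:ℝ)*Real.log r + V₁ r < 0)
    (hneg2 : ∀ r : ℝ, 0 < r → 2*ε*(N₂:ℝ)*Real.log r + V₂ r < 0)
    (hasymp1 : ∀ r : ℝ, 1 ≤ r → |2*ε*(N₁:ℝ)*Real.log r + V₁ r + 2*β₁*Real.log r| ≤ C₁)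
    (hasymp2 : ∀ r : ℝ, 1 ≤ r → |2*ε*(N₂:ℝ)*Real.log r + V₂ r + 2*β₂*Real.log r| ≤ C₂) :
    (∀ r : ℝ, 0 < r →
      |r * deriv (fun s : ℝ => 2*ε*(N₁:ℝ)*Real.log s + V₁ s) r| ≤ max (2*(N₁:ℝ)) (2*β₁)) ∧
    (∀ r : ℝ, 1 ≤ r → 2*ε*(N₁:ℝ)*Real.log r + V₁ r ≤ -2*Real.log r +
      Real.log (4*β₁*β₂ + max (2*(N₁:ℝ)) (2*β₁) * max (2*(N₂:ℝ)) (2*β₂))) := by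
  -- derivative of U₁, U₂
  have hU1d : ∀ r, 0 < r → HasDerivAt (fun s => 2*ε*(N₁:ℝ)*Real.log s + V₁ s)
      ((2*ε*(N₁:ℝ) + r * deriv V₁ r) / r) r := by
    intro r hr
    have h1 := (Real.hasDerivAt_log hr.ne').const_mul (2*ε*(N₁:ℝ))
    have h2 := h1.add (hV1diff r).hasDerivAt
    refine h2.congr_deriv ?_
    field_simp
  have hU2d : ∀ r, 0 < r → HasDerivAt (fun s => 2*ε*(N₂:ℝ)*Real.log s + V₂ s)
      ((2*ε*(N₂:ℝ) + r * deriv V₂ r) / r) r := by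
    intro r hr
    have h1 := (Real.hasDerivAt_log hr.ne').const_mul (2*ε*(N₂:ℝ))
    have h2 := h1.add (hV2diff r).hasDerivAt
    refine h2.congr_deriv ?_
    field_simp
  -- E bounds
  have hE1pos : ∀ r : ℝ, 0 < Real.exp (2*ε*(N₁:ℝ)*Real.log r + V₁ r) := fun r => Real.exp_pos _
  have hE2pos : ∀ r : ℝ, 0 < Real.exp (2*ε*(N₂:ℝ)*Real.log r + V₂ r) := fun r => Real.exp_pos _
  have hE1le : ∀ r : ℝ, 0 < r → Real.exp (2*ε*(N₁:ℝ)*Real.log r + V₁ r) ≤ 1 := by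
    intro r hr; exact (Real.exp_lt_one_iff.2 (hneg1 r hr)).le
  have hE2le : ∀ r : ℝ, 0 < r → Real.exp (2*ε*(N₂:ℝ)*Real.log r + V₂ r) ≤ 1 := by
    intro r hr; exact (Real.exp_lt_one_iff.2 (hneg2 r hr)).le
  -- derivative of f₁, f₂
  have hf1d : ∀ r, 0 < r → HasDerivAt (fun s => 2*ε*(N₁:ℝ) + s * deriv V₁ s)
      (-(r * (Real.exp (2*ε*(N₂:ℝ)*Real.log r + V₂ r)
          * (1 - Real.exp (2*ε*(N₁:ℝ)*Real.log r + V₁ r))))) r := by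
    intro r hr
    have h1 := ((hasDerivAt_id r).mul (hdd1 r)).const_add (2*ε*(N₁:ℝ))
    refine h1.congr_deriv ?_
    have h := hpde1 r hr
    have hdd : deriv (deriv V₁) r
        = -(Real.exp (2*ε*(N₂:ℝ)*Real.log r + V₂ r)
          * (1 - Real.exp (2*ε*(N₁:ℝ)*Real.log r + V₁ r))) - deriv V₁ r / r := by linarith
    rw [hdd]
    simp only [id_eq]
    field_simp
    ring
  have hf2d : ∀ r, 0 < r → HasDerivAt (fun s => 2*ε*(N₂:ℝ) + s * deriv V₂ s)
      (-(r * (Real.exp (2*ε*(N₁:ℝ)*Real.log r + V₁ r)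
          * (1 - Real.exp (2*ε*(N₂:ℝ)*Real.log r + V₂ r))))) r := by
    intro r hr
    have h1 := ((hasDerivAt_id r).mul (hdd2 r)).const_add (2*ε*(N₂:ℝ))
    refine h1.congr_deriv ?_
    have h := hpde2 r hr
    have hdd : deriv (deriv V₂) r
        = -(Real.exp (2*ε*(N₁:ℝ)*Real.log r + V₁ r)
          * (1 - Real.exp (2*ε*(N₂:ℝ)*Real.log r + V₂ r))) - deriv V₂ r / r := by linarith
    rw [hdd]
    simp only [id_eq]
    field_simp
    ring
  -- antitonicity of f₁, f₂
  have hanti1 : AntitoneOn (fun s => 2*ε*(N₁:ℝ) + s * deriv V₁ s) (Set.Ioi 0) := by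
    apply antiOn_Ioi' hf1d
    intro r hr
    have h3 : 0 ≤ r * (Real.exp (2*ε*(N₂:ℝ)*Real.log r + V₂ r)
        * (1 - Real.exp (2*ε*(N₁:ℝ)*Real.log r + V₁ r))) :=
      mul_nonneg hr.le (mul_nonneg (hE2pos r).le (by linarith [hE1le r hr]))
    linarith
  have hanti2 : AntitoneOn (fun s => 2*ε*(N₂:ℝ) + s * deriv V₂ s) (Set.Ioi 0) := by
    apply antiOn_Ioi' hf2d
    intro r hr
    have h3 : 0 ≤ r * (Real.exp (2*ε*(N₁:ℝ)*Real.log r + V₁ r)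
        * (1 - Real.exp (2*ε*(N₂:ℝ)*Real.log r + V₂ r))) :=
      mul_nonneg hr.le (mul_nonneg (hE1pos r).le (by linarith [hE2le r hr]))
    linarith
  obtain ⟨hup1, hlo1, hlim1⟩ :=
    compFacts N₁ β₁ C₁ ε hβ₁ hε0 hε1 V₁ hdV1c hasymp1 hanti1 hU1d
  obtain ⟨hup2, hlo2, hlim2⟩ :=
    compFacts N₂ β₂ C₂ ε hβ₂ hε0 hε1 V₂ hdV2c hasymp2 hanti2 hU2d
  have habs1 : ∀ r, 0 < r → |2*ε*(N₁:ℝ) + r * deriv V₁ r| ≤ max (2*(N₁:ℝ)) (2*β₁) := by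
    intro r hr
    rw [abs_le]
    constructor
    · have h1 : -(2*β₁) ≤ 2*ε*(N₁:ℝ) + r * deriv V₁ r := hlo1 r hr
      have h2 : 2*β₁ ≤ max (2*(N₁:ℝ)) (2*β₁) := le_max_right _ _
      linarith
    · exact le_trans (hup1 r hr) (le_trans (le_max_left _ _) le_rfl)
  have habs2 : ∀ r, 0 < r → |2*ε*(N₂:ℝ) + r * deriv V₂ r| ≤ max (2*(N₂:ℝ)) (2*β₂) := by
    intro r hr
    rw [abs_le]
    constructor
    · have h1 : -(2*β₂) ≤ 2*ε*(N₂:ℝ) + r * deriv V₂ r := hlo2 r hr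
      have h2 : 2*β₂ ≤ max (2*(N₂:ℝ)) (2*β₂) := le_max_right _ _
      linarith
    · exact le_trans (hup2 r hr) (le_trans (le_max_left _ _) le_rfl)
  have habs1' : ∀ r : ℝ, 0 < r →
      |r * deriv (fun s : ℝ => 2*ε*(N₁:ℝ)*Real.log s + V₁ s) r| ≤ max (2*(N₁:ℝ)) (2*β₁) := by
    intro r hr
    rw [(hU1d r hr).deriv]
    have he : r * ((2*ε*(N₁:ℝ) + r * deriv V₁ r) / r) = 2*ε*(N₁:ℝ) + r * deriv V₁ r := by
      field_simp
    rw [he]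
    exact habs1 r hr
  refine ⟨habs1', ?_⟩
  -- Pohozaev-type monotone quantity
  have hQd : ∀ r, 0 < r → HasDerivAt (fun s =>
      (2*ε*(N₁:ℝ) + s * deriv V₁ s) * (2*ε*(N₂:ℝ) + s * deriv V₂ s)
      + s^2 * (Real.exp (2*ε*(N₁:ℝ)*Real.log s + V₁ s)
          + Real.exp (2*ε*(N₂:ℝ)*Real.log s + V₂ s)
          - Real.exp (2*ε*(N₁:ℝ)*Real.log s + V₁ s)
            * Real.exp (2*ε*(N₂:ℝ)*Real.log s + V₂ s)))
      (2*r*(Real.exp (2*ε*(N₁:ℝ)*Real.log r + V₁ r)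
          + Real.exp (2*ε*(N₂:ℝ)*Real.log r + V₂ r)
          - Real.exp (2*ε*(N₁:ℝ)*Real.log r + V₁ r)
            * Real.exp (2*ε*(N₂:ℝ)*Real.log r + V₂ r))) r := by
    intro r hr
    have hE1d := (hU1d r hr).exp
    have hE2d := (hU2d r hr).exp
    have hFd := (hE1d.add hE2d).sub (hE1d.mul hE2d)
    have hr2 : HasDerivAt (fun s : ℝ => s^2) (2*r) r := by simpa using hasDerivAt_pow 2 r
    have hQ := ((hf1d r hr).mul (hf2d r hr)).add (hr2.mul hFd)
    refine hQ.congr_deriv ?_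
    have hrne : r ≠ 0 := hr.ne'
    simp only [Pi.add_apply, Pi.sub_apply, Pi.mul_apply]
    field_simp
    ring
  have hQmono : MonotoneOn (fun s =>
      (2*ε*(N₁:ℝ) + s * deriv V₁ s) * (2*ε*(N₂:ℝ) + s * deriv V₂ s)
      + s^2 * (Real.exp (2*ε*(N₁:ℝ)*Real.log s + V₁ s)
          + Real.exp (2*ε*(N₂:ℝ)*Real.log s + V₂ s)
          - Real.exp (2*ε*(N₁:ℝ)*Real.log s + V₁ s)
            * Real.exp (2*ε*(N₂:ℝ)*Real.log s + V₂ s))) (Set.Ioi 0) := by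
    apply monoOn_Ioi' hQd
    intro r hr
    have hF : 0 ≤ Real.exp (2*ε*(N₁:ℝ)*Real.log r + V₁ r)
          + Real.exp (2*ε*(N₂:ℝ)*Real.log r + V₂ r)
          - Real.exp (2*ε*(N₁:ℝ)*Real.log r + V₁ r)
            * Real.exp (2*ε*(N₂:ℝ)*Real.log r + V₂ r) := by
      nlinarith [mul_nonneg (hE1pos r).le (sub_nonneg.2 (hE2le r hr)), (hE1pos r).le,
        (hE2pos r).le]
    have h2r : (0:ℝ) ≤ 2*r := by linarith
    exact mul_nonneg h2r hF
  -- decay of r^2 * E_i at infinity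
  have hE1lim : Tendsto (fun r => r^2 * Real.exp (2*ε*(N₁:ℝ)*Real.log r + V₁ r))
      atTop (nhds 0) := by
    have hg : Tendsto (fun r : ℝ => Real.exp (C₁ + (2-2*β₁) * Real.log r)) atTop (nhds 0) := by
      apply Real.tendsto_exp_atBot.comp
      apply tendsto_atBot_add_const_left
      exact Tendsto.const_mul_atTop_of_neg (by linarith) Real.tendsto_log_atTop
    apply tendsto_of_tendsto_of_tendsto_of_le_of_le' tendsto_const_nhds hg
    · filter_upwards with r
      positivity
    · filter_upwards [eventually_ge_atTop (1:ℝ)] with r hr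
      have hr0 : (0:ℝ) < r := lt_of_lt_of_le one_pos hr
      have hsq : r^2 = Real.exp (2 * Real.log r) := by
        rw [show (2:ℝ) * Real.log r = ((2:ℕ):ℝ) * Real.log r by norm_num,
          Real.exp_nat_mul, Real.exp_log hr0]
      rw [hsq, ← Real.exp_add]
      apply Real.exp_le_exp.2
      have := (abs_le.1 (hasymp1 r hr)).2
      linarith
  have hE2lim : Tendsto (fun r => r^2 * Real.exp (2*ε*(N₂:ℝ)*Real.log r + V₂ r))
      atTop (nhds 0) := by
    have hg : Tendsto (fun r : ℝ => Real.exp (C₂ + (2-2*β₂) * Real.log r)) atTop (nhds 0) := by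
      apply Real.tendsto_exp_atBot.comp
      apply tendsto_atBot_add_const_left
      exact Tendsto.const_mul_atTop_of_neg (by linarith) Real.tendsto_log_atTop
    apply tendsto_of_tendsto_of_tendsto_of_le_of_le' tendsto_const_nhds hg
    · filter_upwards with r
      positivity
    · filter_upwards [eventually_ge_atTop (1:ℝ)] with r hr
      have hr0 : (0:ℝ) < r := lt_of_lt_of_le one_pos hr
      have hsq : r^2 = Real.exp (2 * Real.log r) := by
        rw [show (2:ℝ) * Real.log r = ((2:ℕ):ℝ) * Real.log r by norm_num,
          Real.exp_nat_mul, Real.exp_log hr0]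
      rw [hsq, ← Real.exp_add]
      apply Real.exp_le_exp.2
      have := (abs_le.1 (hasymp2 r hr)).2
      linarith
  have hFlim : Tendsto (fun r => r^2 * (Real.exp (2*ε*(N₁:ℝ)*Real.log r + V₁ r)
      + Real.exp (2*ε*(N₂:ℝ)*Real.log r + V₂ r)
      - Real.exp (2*ε*(N₁:ℝ)*Real.log r + V₁ r)
        * Real.exp (2*ε*(N₂:ℝ)*Real.log r + V₂ r))) atTop (nhds 0) := by
    have hsum : Tendsto (fun r => r^2 * Real.exp (2*ε*(N₁:ℝ)*Real.log r + V₁ r)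
        + r^2 * Real.exp (2*ε*(N₂:ℝ)*Real.log r + V₂ r)) atTop (nhds 0) := by
      simpa using hE1lim.add hE2lim
    apply tendsto_of_tendsto_of_tendsto_of_le_of_le' tendsto_const_nhds hsum
    · filter_upwards [eventually_ge_atTop (1:ℝ)] with r hr
      have hr0 : (0:ℝ) < r := lt_of_lt_of_le one_pos hr
      have hF : 0 ≤ Real.exp (2*ε*(N₁:ℝ)*Real.log r + V₁ r)
          + Real.exp (2*ε*(N₂:ℝ)*Real.log r + V₂ r)
          - Real.exp (2*ε*(N₁:ℝ)*Real.log r + V₁ r)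
            * Real.exp (2*ε*(N₂:ℝ)*Real.log r + V₂ r) := by
        nlinarith [mul_nonneg (hE1pos r).le (sub_nonneg.2 (hE2le r hr0)), (hE1pos r).le,
          (hE2pos r).le]
      positivity
    · filter_upwards with r
      nlinarith [mul_nonneg (mul_nonneg (hE1pos r).le (hE2pos r).le) (sq_nonneg r)]
  have hQlim : Tendsto (fun s =>
      (2*ε*(N₁:ℝ) + s * deriv V₁ s) * (2*ε*(N₂:ℝ) + s * deriv V₂ s)
      + s^2 * (Real.exp (2*ε*(N₁:ℝ)*Real.log s + V₁ s)
          + Real.exp (2*ε*(N₂:ℝ)*Real.log s + V₂ s)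
          - Real.exp (2*ε*(N₁:ℝ)*Real.log s + V₁ s)
            * Real.exp (2*ε*(N₂:ℝ)*Real.log s + V₂ s))) atTop (nhds (4*β₁*β₂)) := by
    have h := (hlim1.mul hlim2).add hFlim
    have he : -(2*β₁) * -(2*β₂) + 0 = 4*β₁*β₂ := by ring
    rwa [he] at h
  have hQle : ∀ r, 0 < r →
      (2*ε*(N₁:ℝ) + r * deriv V₁ r) * (2*ε*(N₂:ℝ) + r * deriv V₂ r)
      + r^2 * (Real.exp (2*ε*(N₁:ℝ)*Real.log r + V₁ r)
          + Real.exp (2*ε*(N₂:ℝ)*Real.log r + V₂ r)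
          - Real.exp (2*ε*(N₁:ℝ)*Real.log r + V₁ r)
            * Real.exp (2*ε*(N₂:ℝ)*Real.log r + V₂ r)) ≤ 4*β₁*β₂ := by
    intro r hr
    apply ge_of_tendsto hQlim
    filter_upwards [eventually_ge_atTop (max r 1)] with b hb
    exact hQmono (mem_Ioi.2 hr)
      (mem_Ioi.2 (lt_of_lt_of_le zero_lt_one (le_trans (le_max_right r 1) hb)))
      (le_trans (le_max_left r 1) hb)
  -- conclusion
  intro r hr1
  have hr0 : (0:ℝ) < r := lt_of_lt_of_le one_pos hr1
  have hM1 : (0:ℝ) < max (2*(N₁:ℝ)) (2*β₁) := lt_of_lt_of_le (by linarith) (le_max_right _ _)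
  have hM2 : (0:ℝ) < max (2*(N₂:ℝ)) (2*β₂) := lt_of_lt_of_le (by linarith) (le_max_right _ _)
  have hprod : -(max (2*(N₁:ℝ)) (2*β₁) * max (2*(N₂:ℝ)) (2*β₂)) ≤
      (2*ε*(N₁:ℝ) + r * deriv V₁ r) * (2*ε*(N₂:ℝ) + r * deriv V₂ r) := by
    have h1 := habs1 r hr0
    have h2 := habs2 r hr0
    have h3 : |(2*ε*(N₁:ℝ) + r * deriv V₁ r) * (2*ε*(N₂:ℝ) + r * deriv V₂ r)|
        ≤ max (2*(N₁:ℝ)) (2*β₁) * max (2*(N₂:ℝ)) (2*β₂) := by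
      rw [abs_mul]
      exact mul_le_mul h1 h2 (abs_nonneg _) hM1.le
    linarith [neg_abs_le ((2*ε*(N₁:ℝ) + r * deriv V₁ r) * (2*ε*(N₂:ℝ) + r * deriv V₂ r))]
  have hE1F : r^2 * Real.exp (2*ε*(N₁:ℝ)*Real.log r + V₁ r) ≤
      r^2 * (Real.exp (2*ε*(N₁:ℝ)*Real.log r + V₁ r)
          + Real.exp (2*ε*(N₂:ℝ)*Real.log r + V₂ r)
          - Real.exp (2*ε*(N₁:ℝ)*Real.log r + V₁ r)
            * Real.exp (2*ε*(N₂:ℝ)*Real.log r + V₂ r)) := by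
    nlinarith [mul_nonneg (sq_nonneg r)
      (mul_nonneg (hE2pos r).le (sub_nonneg.2 (hE1le r hr0)))]
  have hbound : r^2 * Real.exp (2*ε*(N₁:ℝ)*Real.log r + V₁ r) ≤
      4*β₁*β₂ + max (2*(N₁:ℝ)) (2*β₁) * max (2*(N₂:ℝ)) (2*β₂) := by
    have := hQle r hr0
    linarith
  have hD : (0:ℝ) < 4*β₁*β₂ + max (2*(N₁:ℝ)) (2*β₁) * max (2*(N₂:ℝ)) (2*β₂) := by
    nlinarith
  have hexp_le : Real.exp (2*ε*(N₁:ℝ)*Real.log r + V₁ r) ≤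
      (4*β₁*β₂ + max (2*(N₁:ℝ)) (2*β₁) * max (2*(N₂:ℝ)) (2*β₂)) / r^2 := by
    rw [le_div_iff₀ (by positivity)]
    linarith [hbound]
  have hlog := Real.log_le_log (Real.exp_pos _) hexp_le
  rw [Real.log_exp, Real.log_div hD.ne' (by positivity : (r:ℝ)^2 ≠ 0),
    Real.log_pow] at hlog
  push_cast at hlog
  linarith

lemma smoothPack {W : ℝ → ℝ} (h : ContDiff ℝ 2 W) :
    Differentiable ℝ W ∧ Continuous (deriv W) ∧
      ∀ r : ℝ, HasDerivAt (deriv W) (deriv (deriv W) r) r := by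
  have h2 : ContDiff ℝ (1+1 : ℕ) W := by exact_mod_cast h
  have hd := (contDiff_succ_iff_deriv (n := 1)).1 h2
  have hdd : Differentiable ℝ (deriv W) := hd.2.2.differentiable (by norm_num)
  exact ⟨hd.1, hdd.continuous, fun r => (hdd r).hasDerivAt⟩

lemma e₀_ne_zero : e₀ ≠ 0 := by
  intro h
  have := norm_e₀
  rw [h, norm_zero] at this
  exact one_ne_zero this.symm

lemma oneSide (N₁ N₂ : ℕ) (β₁ β₂ ε : ℝ) (hβ₁ : 1 < β₁) (hβ₂ : 1 < β₂)
    (hε0 : 0 ≤ ε) (hε1 : ε ≤ 1) (v₁ v₂ : Plane → ℝ)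
    (cd₁ : ContDiff ℝ 2 v₁) (cd₂ : ContDiff ℝ 2 v₂)
    (rad₁ : ∀ x y : Plane, ‖x‖ = ‖y‖ → v₁ x = v₁ y)
    (rad₂ : ∀ x y : Plane, ‖x‖ = ‖y‖ → v₂ x = v₂ y)
    (pde₁ : ∀ x : Plane, lap v₁ x +
      (‖x‖ ^ (2 * ε * (N₂ : ℝ)) * Real.exp (v₂ x)) *
        (1 - ‖x‖ ^ (2 * ε * (N₁ : ℝ)) * Real.exp (v₁ x)) = 0)
    (pde₂ : ∀ x : Plane, lap v₂ x +
      (‖x‖ ^ (2 * ε * (N₁ : ℝ)) * Real.exp (v₁ x)) *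
        (1 - ‖x‖ ^ (2 * ε * (N₂ : ℝ)) * Real.exp (v₂ x)) = 0)
    (neg₁ : ∀ x : Plane, x ≠ 0 → 2 * ε * (N₁ : ℝ) * Real.log ‖x‖ + v₁ x < 0)
    (neg₂ : ∀ x : Plane, x ≠ 0 → 2 * ε * (N₂ : ℝ) * Real.log ‖x‖ + v₂ x < 0)
    (C₁ C₂ : ℝ)
    (asymp₁ : ∀ x : Plane, 1 ≤ ‖x‖ →
      |2 * ε * (N₁ : ℝ) * Real.log ‖x‖ + v₁ x + 2 * β₁ * Real.log ‖x‖| ≤ C₁)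
    (asymp₂ : ∀ x : Plane, 1 ≤ ‖x‖ →
      |2 * ε * (N₂ : ℝ) * Real.log ‖x‖ + v₂ x + 2 * β₂ * Real.log ‖x‖| ≤ C₂) :
    (∀ r : ℝ, 0 < r →
      |r * deriv (fun s : ℝ => 2 * ε * (N₁:ℝ) * Real.log s + v₁ (s • e₀)) r|
        ≤ max (2*(N₁:ℝ)) (2*β₁)) ∧
    (∀ r : ℝ, 1 ≤ r → 2 * ε * (N₁:ℝ) * Real.log r + v₁ (r • e₀) ≤ -2*Real.log r +
      Real.log (4*β₁*β₂ + max (2*(N₁:ℝ)) (2*β₁) * max (2*(N₂:ℝ)) (2*β₂))) := by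
  obtain ⟨hV1diff, hdV1c, hdd1⟩ := smoothPack (contDiff_Vr cd₁)
  obtain ⟨hV2diff, hdV2c, hdd2⟩ := smoothPack (contDiff_Vr cd₂)
  have hnorm : ∀ r : ℝ, 0 < r → ‖r • e₀‖ = r := by
    intro r hr; rw [norm_smul_e₀, abs_of_pos hr]
  have hne : ∀ r : ℝ, 0 < r → r • e₀ ≠ (0 : Plane) := by
    intro r hr; exact smul_ne_zero hr.ne' e₀_ne_zero
  have hrpow : ∀ (M : ℕ) (r a : ℝ), 0 < r →
      r ^ (2 * ε * (M:ℝ)) * Real.exp a = Real.exp (2 * ε * (M:ℝ) * Real.log r + a) := by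
    intro M r a hr
    rw [Real.rpow_def_of_pos hr, ← Real.exp_add]
    congr 1
    ring
  have hpde1' : ∀ r : ℝ, 0 < r →
      deriv (deriv (fun s : ℝ => v₁ (s • e₀))) r + deriv (fun s : ℝ => v₁ (s • e₀)) r / r
      = -(Real.exp (2*ε*(N₂:ℝ)*Real.log r + v₂ (r • e₀))
          * (1 - Real.exp (2*ε*(N₁:ℝ)*Real.log r + v₁ (r • e₀)))) := by
    intro r hr
    have hx := pde₁ (r • e₀)
    rw [hnorm r hr, hrpow N₂ r _ hr, hrpow N₁ r _ hr] at hx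
    rw [← lap_radial cd₁ rad₁ hr]
    linarith
  have hpde2' : ∀ r : ℝ, 0 < r →
      deriv (deriv (fun s : ℝ => v₂ (s • e₀))) r + deriv (fun s : ℝ => v₂ (s • e₀)) r / r
      = -(Real.exp (2*ε*(N₁:ℝ)*Real.log r + v₁ (r • e₀))
          * (1 - Real.exp (2*ε*(N₂:ℝ)*Real.log r + v₂ (r • e₀)))) := by
    intro r hr
    have hx := pde₂ (r • e₀)
    rw [hnorm r hr, hrpow N₂ r _ hr, hrpow N₁ r _ hr] at hx
    rw [← lap_radial cd₂ rad₂ hr]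
    linarith
  have hneg1' : ∀ r : ℝ, 0 < r → 2*ε*(N₁:ℝ)*Real.log r + v₁ (r • e₀) < 0 := by
    intro r hr
    have := neg₁ (r • e₀) (hne r hr)
    rwa [hnorm r hr] at this
  have hneg2' : ∀ r : ℝ, 0 < r → 2*ε*(N₂:ℝ)*Real.log r + v₂ (r • e₀) < 0 := by
    intro r hr
    have := neg₂ (r • e₀) (hne r hr)
    rwa [hnorm r hr] at this
  have hasymp1' : ∀ r : ℝ, 1 ≤ r →
      |2*ε*(N₁:ℝ)*Real.log r + v₁ (r • e₀) + 2*β₁*Real.log r| ≤ C₁ := by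
    intro r hr
    have hr0 : (0:ℝ) < r := lt_of_lt_of_le one_pos hr
    have := asymp₁ (r • e₀) (by rw [hnorm r hr0]; exact hr)
    rwa [hnorm r hr0] at this
  have hasymp2' : ∀ r : ℝ, 1 ≤ r →
      |2*ε*(N₂:ℝ)*Real.log r + v₂ (r • e₀) + 2*β₂*Real.log r| ≤ C₂ := by
    intro r hr
    have hr0 : (0:ℝ) < r := lt_of_lt_of_le one_pos hr
    have := asymp₂ (r • e₀) (by rw [hnorm r hr0]; exact hr)
    rwa [hnorm r hr0] at this
  exact core N₁ N₂ β₁ β₂ ε C₁ C₂ hβ₁ hβ₂ hε0 hε1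
    (fun s : ℝ => v₁ (s • e₀)) (fun s : ℝ => v₂ (s • e₀))
    hV1diff hV2diff hdV1c hdV2c hdd1 hdd2 hpde1' hpde2' hneg1' hneg2' hasymp1' hasymp2'

theorem stmt2 (N₁ N₂ : ℕ) (β₁ β₂ : ℝ) (hβ₁ : 1 < β₁) (hβ₂ : 1 < β₂)
    (hcond : (β₁ - 1) * (β₂ - 1) > ((N₁ : ℝ) + 1) * ((N₂ : ℝ) + 1)) :
    ∃ C : ℝ, ∀ ε ∈ Set.Icc (0 : ℝ) 1, ∀ sol : RadSol N₁ N₂ β₁ β₂ ε,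
      (∀ r : ℝ, 0 < r →
        |r * deriv (fun s : ℝ => 2 * ε * (N₁ : ℝ) * Real.log s + sol.v₁ (s • e₀)) r| ≤ C ∧
        |r * deriv (fun s : ℝ => 2 * ε * (N₂ : ℝ) * Real.log s + sol.v₂ (s • e₀)) r| ≤ C) ∧
      (∀ r : ℝ, 1 ≤ r →
        2 * ε * (N₁ : ℝ) * Real.log r + sol.v₁ (r • e₀) ≤ -2 * Real.log r + C ∧
        2 * ε * (N₂ : ℝ) * Real.log r + sol.v₂ (r • e₀) ≤ -2 * Real.log r + C) := by
  refine ⟨max (max (max (2*(N₁:ℝ)) (2*β₁)) (max (2*(N₂:ℝ)) (2*β₂)))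
      (max (Real.log (4*β₁*β₂ + max (2*(N₁:ℝ)) (2*β₁) * max (2*(N₂:ℝ)) (2*β₂)))
           (Real.log (4*β₂*β₁ + max (2*(N₂:ℝ)) (2*β₂) * max (2*(N₁:ℝ)) (2*β₁)))), ?_⟩
  intro ε hε sol
  obtain ⟨Ca, asymp₁⟩ := sol.asymp₁
  obtain ⟨Cb, asymp₂⟩ := sol.asymp₂
  have h1 := oneSide N₁ N₂ β₁ β₂ ε hβ₁ hβ₂ hε.1 hε.2 sol.v₁ sol.v₂ sol.cd₁ sol.cd₂
    sol.rad₁ sol.rad₂ sol.pde₁ sol.pde₂ sol.neg₁ sol.neg₂ Ca Cb asymp₁ asymp₂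
  have h2 := oneSide N₂ N₁ β₂ β₁ ε hβ₂ hβ₁ hε.1 hε.2 sol.v₂ sol.v₁ sol.cd₂ sol.cd₁
    sol.rad₂ sol.rad₁ sol.pde₂ sol.pde₁ sol.neg₂ sol.neg₁ Cb Ca asymp₂ asymp₁
  constructor
  · intro r hr
    exact ⟨le_trans (h1.1 r hr) (le_trans (le_max_left _ _) (le_max_left _ _)),
      le_trans (h2.1 r hr) (le_trans (le_max_right _ _) (le_max_left _ _))⟩
  · intro r hr
    constructor
    · have hb := h1.2 r hr
      have hle : Real.log (4*β₁*β₂ + max (2*(N₁:ℝ)) (2*β₁) * max (2*(N₂:ℝ)) (2*β₂))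
          ≤ max (max (max (2*(N₁:ℝ)) (2*β₁)) (max (2*(N₂:ℝ)) (2*β₂)))
            (max (Real.log (4*β₁*β₂ + max (2*(N₁:ℝ)) (2*β₁) * max (2*(N₂:ℝ)) (2*β₂)))
              (Real.log (4*β₂*β₁ + max (2*(N₂:ℝ)) (2*β₂) * max (2*(N₁:ℝ)) (2*β₁)))) :=
        le_trans (le_max_left _ _) (le_max_right _ _)
      linarith
    · have hb := h2.2 r hr
      have hle : Real.log (4*β₂*β₁ + max (2*(N₂:ℝ)) (2*β₂) * max (2*(N₁:ℝ)) (2*β₁))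
          ≤ max (max (max (2*(N₁:ℝ)) (2*β₁)) (max (2*(N₂:ℝ)) (2*β₂)))
            (max (Real.log (4*β₁*β₂ + max (2*(N₁:ℝ)) (2*β₁) * max (2*(N₂:ℝ)) (2*β₂)))
              (Real.log (4*β₂*β₁ + max (2*(N₂:ℝ)) (2*β₂) * max (2*(N₁:ℝ)) (2*β₁)))) :=
        le_trans (le_max_right _ _) (le_max_right _ _)
      linarith
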